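/- For every nested relational type T there is a monadic type U_{d(T)} (with d(U)=d(Unit)=0, d(Set(T))=1+d(T), d(T1×T2)=2+max(d(T1),d(T2))), an injection Convert_T from objects of type T to objects of type U_{d(T)}, and a function Convert⁻¹_T from objects of type U_{d(T)} to objects of type T, such that Convert⁻¹_T ∘ Convert_T is the identity on objects of type T. -/
import Mathlib


/-- Nested relational types. -/
inductive NType : Type
  | U : NType
  | unit : NType
  | prod : NType → NType → NType
  | set : NType → NType

/-- Objects of a nested relational type over a set `α` of Ur-elements. -/
def Obj (α : Type) : NType → Type
  | .U => α
  | .unit => Unit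
  | .prod a b => Obj α a × Obj α b
  | .set t => Set (Obj α t)

/-- Typed de Bruijn variables over a context of types. -/
inductive Var : List NType → NType → Type
  | zero {Γ t} : Var (t :: Γ) t
  | succ {Γ s t} : Var Γ t → Var (s :: Γ) t

/-- Environments: assignments of objects to all variables of a context. -/
def Env (α : Type) (Γ : List NType) : Type := ∀ t, Var Γ t → Obj α t

def Env.nil {α : Type} : Env α [] := fun _ v => nomatch v

def Env.cons {α : Type} {Γ : List NType} {t : NType} (x : Obj α t) (ρ : Env α Γ) :
    Env α (t :: Γ) := fun s v =>
  match v with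
  | .zero => x
  | .succ w => ρ s w

/-- Terms: variables, unit, tupling and projections. -/
inductive Tm : List NType → NType → Type
  | var {Γ t} : Var Γ t → Tm Γ t
  | unit {Γ} : Tm Γ .unit
  | pair {Γ a b} : Tm Γ a → Tm Γ b → Tm Γ (.prod a b)
  | fst {Γ a b} : Tm Γ (.prod a b) → Tm Γ a
  | snd {Γ a b} : Tm Γ (.prod a b) → Tm Γ b

def Tm.eval {α : Type} {Γ : List NType} (ρ : Env α Γ) : ∀ {t}, Tm Γ t → Obj α t
  | _, .var v => ρ _ v
  | _, .unit => (() : Unit)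
  | _, .pair a b => ((Tm.eval ρ a, Tm.eval ρ b) : _ × _)
  | _, .fst (a := a) (b := b) p => (Tm.eval ρ p : Obj α a × Obj α b).1
  | _, .snd (a := a) (b := b) p => (Tm.eval ρ p : Obj α a × Obj α b).2

/-- Δ₀ formulas: (dis)equality of Ur-elements, ⊤, ⊥, ∧, ∨ and bounded quantifiers. -/
inductive Delta0 : List NType → Type
  | eqU {Γ} : Tm Γ .U → Tm Γ .U → Delta0 Γ
  | neU {Γ} : Tm Γ .U → Tm Γ .U → Delta0 Γ
  | tru {Γ} : Delta0 Γ
  | fls {Γ} : Delta0 Γ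
  | and {Γ} : Delta0 Γ → Delta0 Γ → Delta0 Γ
  | or {Γ} : Delta0 Γ → Delta0 Γ → Delta0 Γ
  | all {Γ t} : Tm Γ (.set t) → Delta0 (t :: Γ) → Delta0 Γ
  | ex {Γ t} : Tm Γ (.set t) → Delta0 (t :: Γ) → Delta0 Γ

/-- Satisfaction of a Δ₀ formula in an environment. -/
def Delta0.sat {α : Type} : ∀ {Γ}, Env α Γ → Delta0 Γ → Prop
  | _, ρ, .eqU a b => Tm.eval ρ a = Tm.eval ρ b
  | _, ρ, .neU a b => Tm.eval ρ a ≠ Tm.eval ρ b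
  | _, _, .tru => True
  | _, _, .fls => False
  | _, ρ, .and φ ψ => Delta0.sat ρ φ ∧ Delta0.sat ρ ψ
  | _, ρ, .or φ ψ => Delta0.sat ρ φ ∨ Delta0.sat ρ ψ
  | _, ρ, .all (t := T) s φ =>
      ∀ x : Obj _ T, x ∈ (show Set (Obj _ T) from Tm.eval ρ s) → Delta0.sat (Env.cons x ρ) φ
  | _, ρ, .ex (t := T) s φ =>
      ∃ x : Obj _ T, x ∈ (show Set (Obj _ T) from Tm.eval ρ s) ∧ Delta0.sat (Env.cons x ρ) φ

/-- Nested relational calculus expressions. -/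
inductive NRC : List NType → NType → Type
  | var {Γ t} : Var Γ t → NRC Γ t
  | unit {Γ} : NRC Γ .unit
  | pair {Γ a b} : NRC Γ a → NRC Γ b → NRC Γ (.prod a b)
  | fst {Γ a b} : NRC Γ (.prod a b) → NRC Γ a
  | snd {Γ a b} : NRC Γ (.prod a b) → NRC Γ b
  | sing {Γ t} : NRC Γ t → NRC Γ (.set t)
  | empty {Γ t} : NRC Γ (.set t)
  | union {Γ t} : NRC Γ (.set t) → NRC Γ (.set t) → NRC Γ (.set t)
  | diff {Γ t} : NRC Γ (.set t) → NRC Γ (.set t) → NRC Γ (.set t)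
  | bigUnion {Γ a b} : NRC (a :: Γ) (.set b) → NRC Γ (.set a) → NRC Γ (.set b)

/-- Semantics of NRC expressions. -/
def NRC.eval {α : Type} : ∀ {Γ}, Env α Γ → ∀ {t}, NRC Γ t → Obj α t
  | _, ρ, _, .var v => ρ _ v
  | _, _, _, .unit => (() : Unit)
  | _, ρ, _, .pair a b => ((NRC.eval ρ a, NRC.eval ρ b) : _ × _)
  | _, ρ, _, .fst (a := a) (b := b) p => (NRC.eval ρ p : Obj α a × Obj α b).1
  | _, ρ, _, .snd (a := a) (b := b) p => (NRC.eval ρ p : Obj α a × Obj α b).2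
  | _, ρ, _, .sing e => ({NRC.eval ρ e} : Set _)
  | _, _, _, .empty => (∅ : Set _)
  | _, ρ, _, .union e1 e2 => ((NRC.eval ρ e1 : Set _) ∪ (NRC.eval ρ e2 : Set _) : Set _)
  | _, ρ, _, .diff e1 e2 => ((NRC.eval ρ e1 : Set _) \ (NRC.eval ρ e2 : Set _) : Set _)
  | _, ρ, _, .bigUnion (a := a) (b := b) e2 e1 =>
      show Set (Obj α b) from
        ⋃ x ∈ (show Set (Obj α a) from NRC.eval ρ e1),
          (show Set (Obj α b) from NRC.eval (Env.cons x ρ) e2)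

/-- The Boolean type `Set(Unit)`. -/
abbrev NType.bool : NType := .set .unit
/-- Monadic types `U_0 = U`, `U_{n+1} = Set(U_n)`. -/
def MT : ℕ → NType
  | 0 => .U
  | n + 1 => .set (MT n)

/-- The iterated-singleton embedding `U_n → U_{n+k}`. -/
def upBy {α : Type} {n : ℕ} : ∀ k : ℕ, Obj α (MT n) → Obj α (MT (n + k))
  | 0, x => x
  | k + 1, x => (show Set (Obj α (MT (n + k))) from {upBy k x})

/-- The embedding `↑ : U_n → U_m` for `n ≤ m`. -/
def upTo {α : Type} {n : ℕ} (m : ℕ) (h : n ≤ m) (x : Obj α (MT n)) : Obj α (MT m) :=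
  cast (congrArg (fun k => Obj α (MT k)) (Nat.add_sub_cancel' h)) (upBy (m - n) x)

/-- Kuratowski-style pairing `Pair(a,b) = {{↑a}, {↑a, ↑b}}` on monadic types. -/
def kPair {α : Type} {n1 n2 : ℕ} (a : Obj α (MT n1)) (b : Obj α (MT n2)) :
    Obj α (MT (max n1 n2 + 2)) :=
  show Set (Set (Obj α (MT (max n1 n2)))) from
    { {upTo (max n1 n2) (le_max_left n1 n2) a},
      {upTo (max n1 n2) (le_max_left n1 n2) a, upTo (max n1 n2) (le_max_right n1 n2) b} }

/-- The monadic depth of a nested relational type. -/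
def mdepth : NType → ℕ
  | .U => 0
  | .unit => 0
  | .set t => 1 + mdepth t
  | .prod a b => 2 + max (mdepth a) (mdepth b)

namespace MonEnc

variable {α : Type}

def oCast {n m : ℕ} (h : n = m) (x : Obj α (MT n)) : Obj α (MT m) :=
  cast (congrArg (fun k => Obj α (MT k)) h) x

lemma oCast_inj {n m : ℕ} (h : n = m) : Function.Injective (oCast (α := α) h) := by
  subst h
  intro a b hh
  simpa [oCast] using hh

lemma upBy_inj {n : ℕ} : ∀ k, Function.Injective (upBy (α := α) (n := n) k)
  | 0 => fun _ _ h => h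
  | k + 1 => fun a b h => upBy_inj k (Set.singleton_injective h)

lemma upTo_inj {n : ℕ} (m : ℕ) (h : n ≤ m) :
    Function.Injective (upTo (α := α) (n := n) m h) := by
  intro a b hh
  simp only [upTo, cast_inj] at hh
  exact upBy_inj _ hh

lemma kuratowski {β : Type} {a b c d : β}
    (h : ({{a}, {a, b}} : Set (Set β)) = {{c}, {c, d}}) : a = c ∧ b = d := by
  rw [Set.pair_eq_pair_iff] at h
  rcases h with ⟨h1, h2⟩ | ⟨h1, h2⟩
  · have hac : a = c := by
      have := Set.singleton_eq_singleton_iff.mp h1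
      exact this
    rw [Set.pair_eq_pair_iff] at h2
    rcases h2 with ⟨_, hbd⟩ | ⟨had, hbc⟩
    · exact ⟨hac, hbd⟩
    · exact ⟨hac, hbc.trans (hac.symm.trans had)⟩
  · -- {a} = {c, d} and {a, b} = {c}
    have hca : c = a := by
      have : c ∈ ({a} : Set β) := by rw [h1]; simp
      simpa using this
    have hda : d = a := by
      have : d ∈ ({a} : Set β) := by rw [h1]; simp
      simpa using this
    have hba : b = a := by
      have : b ∈ ({c} : Set β) := by rw [← h2]; simp
      simp only [Set.mem_singleton_iff] at this
      rw [this, hca]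
    exact ⟨hca.symm, by rw [hba, hda]⟩

lemma kPair_inj {n1 n2 : ℕ} {a a' : Obj α (MT n1)} {b b' : Obj α (MT n2)}
    (h : kPair a b = kPair a' b') : a = a' ∧ b = b' := by
  have h' := kuratowski (show _ = _ from h)
  exact ⟨upTo_inj _ _ h'.1, upTo_inj _ _ h'.2⟩

def conv [Inhabited α] : ∀ T : NType, Obj α T → Obj α (MT (mdepth T))
  | .U => fun x => x
  | .unit => fun _ => (default : α)
  | .set t => fun s =>
      oCast (by simp [mdepth, Nat.add_comm])
        (show Obj α (MT (mdepth t + 1)) from conv t '' s)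
  | .prod a b => fun x =>
      oCast (by simp [mdepth, Nat.add_comm])
        (kPair (conv a x.1) (conv b x.2))

theorem conv_inj [Inhabited α] : ∀ T : NType, Function.Injective (conv (α := α) T)
  | .U => fun _ _ h => h
  | .unit => fun _ _ _ => rfl
  | .set t => fun s s' h => by
      have h2 := oCast_inj (α := α) (by simp [mdepth, Nat.add_comm]) h
      exact Set.image_injective.mpr (conv_inj t) h2
  | .prod a b => fun x y h => by
      have h2 := kPair_inj (oCast_inj (α := α) (by simp [mdepth, Nat.add_comm]) h)
      exact Prod.ext (conv_inj a h2.1) (conv_inj b h2.2)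

def objDefault [Inhabited α] : ∀ T : NType, Obj α T
  | .U => (default : α)
  | .unit => ()
  | .prod a b => (objDefault a, objDefault b)
  | .set _ => (∅ : Set _)

end MonEnc

/-- For every nested relational type `T` there is a monadic type
`U_{d(T)}` (with `d(U)=d(Unit)=0`, `d(Set T)=1+d(T)`, `d(T1×T2)=2+max(d T1, d T2)`), an
injection `Convert_T` from objects of type `T` to objects of type `U_{d(T)}`, and a
function `Convert⁻¹_T` in the other direction, with `Convert⁻¹_T ∘ Convert_T = id`. -/
theorem monadic_encoding (α : Type) [Inhabited α] (T : NType) :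
    ∃ (conv : Obj α T → Obj α (MT (mdepth T)))
      (conv' : Obj α (MT (mdepth T)) → Obj α T),
      Function.Injective conv ∧ ∀ x : Obj α T, conv' (conv x) = x := by
  haveI : Nonempty (Obj α T) := ⟨MonEnc.objDefault T⟩
  exact ⟨MonEnc.conv T, Function.invFun (MonEnc.conv T), MonEnc.conv_inj T,
    fun x => Function.leftInverse_invFun (MonEnc.conv_inj T) x⟩
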